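/- arXiv:1606.05848 — 2 statements merged into one kernel-verified Lean document; each statement's English description precedes it below -/
import Mathlib

section
/- Let S be a positive integer and for s = 1,…,S let Ω_s ⊆ ℝⁿ be nonempty, closed and convex sets, A_s real n×n matrices, U_s real n×n unitary matrices, and α_s > 0; set C_s(x) = α_s U_s(Ω_s) + A_s x, K_s = (1/α_s)·U_sᵀ(I − A_s), and L = Σ_{s=1}^{S} ‖I − A_s‖₂². Assume the solution set {x : x ∈ ∩_{s=1}^{S} C_s(x)} is nonempty. Let {x^k} be generated from an arbitrary x⁰ ∈ ℝⁿ by the simultaneous iteration x^{k+1} = x^k − γ_k·Σ_{s=1}^{S} α_s²·K_sᵀ(K_s x^k − P_{Ω_s}(K_s x^k)), where the step sizes satisfy γ_k ∈ (ε, 2/L − ε) for some ε > 0 and all k ≥ 0. Then {x^k} converges to a point x* satisfying x* ∈ ∩_{s=1}^{S} C_s(x*). -/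
noncomputable section

open Matrix Finset Filter

/-- `P` is the metric projection onto the set `Ω`: for every `z`, `P z` is a point of `Ω`
closest to `z`. -/
def IsProjOn {E : Type*} [NormedAddCommGroup E] (Ω : Set E) (P : E → E) : Prop :=
  ∀ z, P z ∈ Ω ∧ ∀ y ∈ Ω, ‖z - P z‖ ≤ ‖z - y‖

open Metric
open scoped RealInnerProductSpace

section Helpers
variable {n : ℕ}


lemma proj_inner {E : Type*} [NormedAddCommGroup E] [InnerProductSpace ℝ E]
    {Ω : Set E} {P : E → E} (hconv : Convex ℝ Ω) (hP : IsProjOn Ω P)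
    (z : E) : ∀ y ∈ Ω, ⟪z - P z, y - P z⟫ ≤ 0 := by
  obtain ⟨hmem, hmin⟩ := hP z
  haveI : Nonempty Ω := ⟨⟨P z, hmem⟩⟩
  refine (norm_eq_iInf_iff_real_inner_le_zero hconv hmem).mp ?_
  refine le_antisymm (le_ciInf fun w => hmin w w.2) ?_
  exact ciInf_le ⟨0, by rintro r ⟨w, rfl⟩; exact norm_nonneg _⟩ (⟨P z, hmem⟩ : Ω)

set_option maxHeartbeats 1000000 in
theorem aux_conv {n S : ℕ}
    (Ω : Fin S → Set (EuclideanSpace ℝ (Fin n)))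
    (hne : ∀ s, (Ω s).Nonempty) (hcl : ∀ s, IsClosed (Ω s)) (hconv : ∀ s, Convex ℝ (Ω s))
    (P : Fin S → EuclideanSpace ℝ (Fin n) → EuclideanSpace ℝ (Fin n))
    (hP : ∀ s, IsProjOn (Ω s) (P s))
    (T : Fin S → (EuclideanSpace ℝ (Fin n) →L[ℝ] EuclideanSpace ℝ (Fin n)))
    (L : ℝ) (hLge : ∑ s, ‖T s‖ ^ 2 ≤ L)
    (hsol : ∃ z, ∀ s, T s z ∈ Ω s)
    (γ : ℕ → ℝ) (ε : ℝ) (hε : 0 < ε) (hγ : ∀ k, ε < γ k ∧ γ k < 2 / L - ε)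
    (x : ℕ → EuclideanSpace ℝ (Fin n))
    (hrec : ∀ k, x (k + 1) = x k - γ k • ∑ s,
      ContinuousLinearMap.adjoint (T s) (T s (x k) - P s (T s (x k)))) :
    ∃ xstar, Tendsto x atTop (nhds xstar) ∧ ∀ s, T s xstar ∈ Ω s := by
  obtain ⟨xh, hxh⟩ := hsol
  have hL0 : 0 < L := by
    obtain ⟨h1, h2⟩ := hγ 0
    have h3 : 0 < 2 / L := by linarith
    rcases div_pos_iff.mp h3 with ⟨-, h⟩ | ⟨h, -⟩
    · exact h
    · norm_num at h
  -- abbreviations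
  set e : ℕ → Fin S → EuclideanSpace ℝ (Fin n) :=
    fun k s => T s (x k) - P s (T s (x k)) with he
  set g : ℕ → EuclideanSpace ℝ (Fin n) :=
    fun k => ∑ s, ContinuousLinearMap.adjoint (T s) (e k s) with hg
  set Q : ℕ → ℝ := fun k => ∑ s, ‖e k s‖ ^ 2 with hQdef
  have hQ0 : ∀ k, 0 ≤ Q k := fun k => Finset.sum_nonneg fun s _ => sq_nonneg _
  set c : ℝ := ε ^ 2 * L with hc
  have hc0 : 0 < c := by positivity
  -- the key Fejér inequality
  have key : ∀ zh, (∀ s, T s zh ∈ Ω s) → ∀ k,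
      ‖x (k + 1) - zh‖ ^ 2 + c * Q k ≤ ‖x k - zh‖ ^ 2 := by
    intro zh hzh k
    have hlow : Q k ≤ ⟪g k, x k - zh⟫ := by
      rw [hg, sum_inner]
      refine Finset.sum_le_sum fun s _ => ?_
      rw [ContinuousLinearMap.adjoint_inner_left]
      have hvar : ⟪T s (x k) - P s (T s (x k)), T s zh - P s (T s (x k))⟫ ≤ 0 :=
        proj_inner (hconv s) (hP s) _ _ (hzh s)
      have hexp : ⟪e k s, T s (x k - zh)⟫
          = ‖e k s‖ ^ 2 - ⟪e k s, T s zh - P s (T s (x k))⟫ := by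
        rw [map_sub]
        have : T s (x k) - T s zh = e k s - (T s zh - P s (T s (x k))) := by
          simp only [he]; abel
        rw [this, inner_sub_right, real_inner_self_eq_norm_sq]
      rw [hexp]
      simp only [he] at hvar ⊢
      linarith
    have hub : ‖g k‖ ^ 2 ≤ L * Q k := by
      have h1 : ‖g k‖ ≤ ∑ s, ‖T s‖ * ‖e k s‖ := by
        refine (norm_sum_le _ _).trans (Finset.sum_le_sum fun s _ => ?_)
        calc ‖ContinuousLinearMap.adjoint (T s) (e k s)‖
            ≤ ‖ContinuousLinearMap.adjoint (T s)‖ * ‖e k s‖ :=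
              ContinuousLinearMap.le_opNorm _ _
          _ = ‖T s‖ * ‖e k s‖ := by
              rw [ContinuousLinearMap.adjoint.norm_map]
      have h2 : (∑ s, ‖T s‖ * ‖e k s‖) ^ 2 ≤ (∑ s, ‖T s‖ ^ 2) * Q k :=
        Finset.sum_mul_sq_le_sq_mul_sq _ _ _
      have h3 : 0 ≤ ∑ s, ‖T s‖ * ‖e k s‖ :=
        Finset.sum_nonneg fun s _ => mul_nonneg (norm_nonneg _) (norm_nonneg _)
      calc ‖g k‖ ^ 2 ≤ (∑ s, ‖T s‖ * ‖e k s‖) ^ 2 := by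
              apply pow_le_pow_left₀ (norm_nonneg _) h1
        _ ≤ (∑ s, ‖T s‖ ^ 2) * Q k := h2
        _ ≤ L * Q k := mul_le_mul_of_nonneg_right hLge (hQ0 k)
    have hstep : x (k + 1) - zh = (x k - zh) - γ k • g k := by
      rw [hrec k]; simp only [hg, he]; abel
    have hexp : ‖x (k + 1) - zh‖ ^ 2
        = ‖x k - zh‖ ^ 2 - 2 * (γ k * ⟪g k, x k - zh⟫) + γ k ^ 2 * ‖g k‖ ^ 2 := by
      rw [hstep, norm_sub_sq_real, norm_smul, real_inner_smul_right, mul_pow]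
      rw [real_inner_comm]
      simp [abs_of_pos (lt_trans hε (hγ k).1)]
    obtain ⟨hγ1, hγ2⟩ := hγ k
    have hγL : γ k * L < 2 - ε * L := by
      have h := (lt_div_iff₀ hL0).mp (show γ k + ε < 2 / L by linarith)
      nlinarith
    have hγ0 : 0 < γ k := lt_trans hε hγ1
    rw [hexp, hc]
    nlinarith [mul_le_mul_of_nonneg_left hub (sq_nonneg (γ k)),
      mul_le_mul_of_nonneg_left hlow (le_of_lt hγ0),
      mul_nonneg (hQ0 k) (le_of_lt hγ0), hQ0 k,
      mul_le_mul_of_nonneg_right hγL.le (mul_nonneg (le_of_lt hγ0) (hQ0 k)),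
      mul_lt_mul_of_pos_right hγ1 (mul_pos hε hL0)]
  -- squared distances to any solution are nonincreasing
  have dec : ∀ zh, (∀ s, T s zh ∈ Ω s) → ∀ k,
      ‖x (k + 1) - zh‖ ^ 2 ≤ ‖x k - zh‖ ^ 2 := by
    intro zh hzh k
    have := key zh hzh k
    nlinarith [mul_nonneg hc0.le (hQ0 k)]
  have anti : ∀ zh, (∀ s, T s zh ∈ Ω s) →
      Antitone fun k => ‖x k - zh‖ ^ 2 := by
    intro zh hzh
    exact antitone_nat_of_succ_le fun k => dec zh hzh k
  -- sum of Q is bounded, hence Q → 0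
  have hsumQ : ∀ m, ∑ k ∈ Finset.range m, Q k ≤ ‖x 0 - xh‖ ^ 2 / c := by
    intro m
    have htel : ∑ k ∈ Finset.range m, (‖x k - xh‖ ^ 2 - ‖x (k + 1) - xh‖ ^ 2)
        = ‖x 0 - xh‖ ^ 2 - ‖x m - xh‖ ^ 2 := Finset.sum_range_sub' _ _
    have hle : c * ∑ k ∈ Finset.range m, Q k ≤ ‖x 0 - xh‖ ^ 2 - ‖x m - xh‖ ^ 2 := by
      rw [Finset.mul_sum, ← htel]
      exact Finset.sum_le_sum fun k _ => by have := key xh hxh k; linarith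
    rw [le_div_iff₀ hc0, mul_comm]
    nlinarith [sq_nonneg (‖x m - xh‖)]
  have hQsummable : Summable Q := summable_of_sum_range_le hQ0 hsumQ
  have hQtend : Tendsto Q atTop (nhds 0) := hQsummable.tendsto_atTop_zero
  -- each error term tends to zero
  have heS : ∀ s, Tendsto (fun k => ‖e k s‖) atTop (nhds 0) := by
    intro s
    have hsq : Tendsto (fun k => ‖e k s‖ ^ 2) atTop (nhds 0) := by
      refine squeeze_zero (fun k => sq_nonneg _) (fun k => ?_) hQtend
      exact Finset.single_le_sum (fun t _ => sq_nonneg (‖e k t‖)) (Finset.mem_univ s)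
    have := hsq.sqrt
    simpa [Real.sqrt_sq (norm_nonneg _)] using this
  -- boundedness and a convergent subsequence
  have hball : ∀ k, x k ∈ Metric.closedBall xh (‖x 0 - xh‖) := by
    intro k
    have h2 : ‖x k - xh‖ ^ 2 ≤ ‖x 0 - xh‖ ^ 2 := anti xh hxh (Nat.zero_le k)
    rw [Metric.mem_closedBall, dist_eq_norm]
    nlinarith [norm_nonneg (x k - xh), norm_nonneg (x 0 - xh)]
  obtain ⟨xstar, -, φ, hφ, hxφ⟩ :=
    tendsto_subseq_of_bounded Metric.isBounded_closedBall hball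
  -- the limit point is a solution
  have hstar : ∀ s, T s xstar ∈ Ω s := by
    intro s
    rw [(hcl s).mem_iff_infDist_zero (hne s)]
    have h1 : Tendsto (fun j => T s (x (φ j))) atTop (nhds (T s xstar)) :=
      ((T s).continuous.tendsto _).comp hxφ
    have h2 : Tendsto (fun j => Metric.infDist (T s (x (φ j))) (Ω s)) atTop
        (nhds (Metric.infDist (T s xstar) (Ω s))) :=
      ((Metric.continuous_infDist_pt (Ω s)).tendsto _).comp h1
    have h3 : Tendsto (fun j => Metric.infDist (T s (x (φ j))) (Ω s)) atTop (nhds 0) := by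
      refine squeeze_zero (fun j => Metric.infDist_nonneg) (fun j => ?_)
        ((heS s).comp hφ.tendsto_atTop)
      calc Metric.infDist (T s (x (φ j))) (Ω s)
          ≤ dist (T s (x (φ j))) (P s (T s (x (φ j)))) :=
            Metric.infDist_le_dist_of_mem (hP s _).1
        _ = ‖e (φ j) s‖ := by rw [dist_eq_norm]
    exact tendsto_nhds_unique h2 h3
  -- full convergence to xstar
  refine ⟨xstar, ?_, hstar⟩
  have hanti : Antitone fun k => ‖x k - xstar‖ ^ 2 := anti xstar hstar
  have hbdd : BddBelow (Set.range fun k => ‖x k - xstar‖ ^ 2) :=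
    ⟨0, by rintro r ⟨k, rfl⟩; exact sq_nonneg _⟩
  have hlim : Tendsto (fun k => ‖x k - xstar‖ ^ 2) atTop
      (nhds (⨅ k, ‖x k - xstar‖ ^ 2)) := tendsto_atTop_ciInf hanti hbdd
  have hsub0 : Tendsto (fun j => ‖x (φ j) - xstar‖ ^ 2) atTop (nhds 0) := by
    have : Tendsto (fun j => x (φ j) - xstar) atTop (nhds 0) := by
      simpa using hxφ.sub (tendsto_const_nhds (x := xstar))
    simpa using ((continuous_norm.tendsto _).comp this).pow 2
  have hiInf : (⨅ k, ‖x k - xstar‖ ^ 2) = 0 :=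
    tendsto_nhds_unique (hlim.comp hφ.tendsto_atTop) hsub0
  rw [hiInf] at hlim
  have hnorm0 : Tendsto (fun k => ‖x k - xstar‖) atTop (nhds 0) := by
    have := hlim.sqrt
    simpa [Real.sqrt_sq (norm_nonneg _)] using this
  rw [tendsto_iff_norm_sub_tendsto_zero]
  exact hnorm0


lemma clm_lin (M : Matrix (Fin n) (Fin n) ℝ) (v : EuclideanSpace ℝ (Fin n)) :
    toEuclideanLin M v = toEuclideanCLM (𝕜 := ℝ) M v := rfl

lemma clm_mul_apply (M N : Matrix (Fin n) (Fin n) ℝ) (v : EuclideanSpace ℝ (Fin n)) :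
    toEuclideanCLM (𝕜 := ℝ) (M * N) v
      = toEuclideanCLM (𝕜 := ℝ) M (toEuclideanCLM (𝕜 := ℝ) N v) := by
  rw [_root_.map_mul]; rfl

lemma clm_transpose (M : Matrix (Fin n) (Fin n) ℝ) :
    toEuclideanCLM (𝕜 := ℝ) Mᵀ
      = ContinuousLinearMap.adjoint (toEuclideanCLM (𝕜 := ℝ) M) := by
  rw [← ContinuousLinearMap.star_eq_adjoint, ← map_star]
  rw [Matrix.star_eq_conjTranspose, conjTranspose_eq_transpose_of_trivial]

-- isometry from Mᵀ * M = 1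
lemma clm_isometry {M : Matrix (Fin n) (Fin n) ℝ} (h : Mᵀ * M = 1)
    (v : EuclideanSpace ℝ (Fin n)) : ‖toEuclideanCLM (𝕜 := ℝ) M v‖ = ‖v‖ := by
  have h1 : ⟪toEuclideanCLM (𝕜 := ℝ) M v, toEuclideanCLM (𝕜 := ℝ) M v⟫
      = ⟪v, v⟫ := by
    rw [← ContinuousLinearMap.adjoint_inner_left, ← clm_transpose, ← clm_mul_apply, h]
    rw [_root_.map_one]
    rfl
  have h2 := real_inner_self_eq_norm_sq (toEuclideanCLM (𝕜 := ℝ) M v)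
  have h3 := real_inner_self_eq_norm_sq v
  rw [h1, h3] at h2
  exact (sq_eq_sq₀ (norm_nonneg _) (norm_nonneg _)).mp h2.symm

lemma clm_opnorm_le_one {M : Matrix (Fin n) (Fin n) ℝ} (h : Mᵀ * M = 1) :
    ‖toEuclideanCLM (𝕜 := ℝ) M‖ ≤ 1 :=
  ContinuousLinearMap.opNorm_le_bound _ zero_le_one fun v => by
    rw [clm_isometry h, one_mul]

end Helpers

set_option maxHeartbeats 1000000 in
theorem stmt_12 {n S : ℕ} (hS : 0 < S)
    (Ω : Fin S → Set (EuclideanSpace ℝ (Fin n)))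
    (hne : ∀ s, (Ω s).Nonempty) (hcl : ∀ s, IsClosed (Ω s)) (hconv : ∀ s, Convex ℝ (Ω s))
    (A U : Fin S → Matrix (Fin n) (Fin n) ℝ)
    (hU1 : ∀ s, (U s)ᵀ * U s = 1) (hU2 : ∀ s, U s * (U s)ᵀ = 1)
    (α : Fin S → ℝ) (hα : ∀ s, 0 < α s)
    (P : Fin S → EuclideanSpace ℝ (Fin n) → EuclideanSpace ℝ (Fin n))
    (hP : ∀ s, IsProjOn (Ω s) (P s))
    (C : Fin S → EuclideanSpace ℝ (Fin n) → Set (EuclideanSpace ℝ (Fin n)))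
    (hC : ∀ s x, C s x =
      (fun y => α s • toEuclideanLin (U s) y + toEuclideanLin (A s) x) '' Ω s)
    (K : Fin S → Matrix (Fin n) (Fin n) ℝ)
    (hK : ∀ s, K s = (1 / α s) • ((U s)ᵀ * (1 - A s)))
    (L : ℝ) (hL : L = ∑ s, ‖toEuclideanCLM (𝕜 := ℝ) (n := Fin n) (1 - A s)‖ ^ 2)
    (hsol : ∃ x, ∀ s, x ∈ C s x)
    (γ : ℕ → ℝ) (ε : ℝ) (hε : 0 < ε) (hγ : ∀ k, γ k ∈ Set.Ioo ε (2 / L - ε))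
    (x : ℕ → EuclideanSpace ℝ (Fin n))
    (hrec : ∀ k, x (k + 1) = x k - γ k • ∑ s, (α s) ^ 2 •
      toEuclideanLin (K s)ᵀ
        (toEuclideanLin (K s) (x k) - P s (toEuclideanLin (K s) (x k)))) :
    ∃ xstar, Tendsto x atTop (nhds xstar) ∧ ∀ s, xstar ∈ C s xstar := by

  have hα0 : ∀ s, α s ≠ 0 := fun s => (hα s).ne'
  -- matrix identity : α s • K s = (U s)ᵀ * (1 - A s)
  have hmat : ∀ s, α s • K s = (U s)ᵀ * (1 - A s) := by
    intro s
    rw [hK s, smul_smul, mul_one_div_cancel (hα0 s), one_smul]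
  set T : Fin S → (EuclideanSpace ℝ (Fin n) →L[ℝ] EuclideanSpace ℝ (Fin n)) :=
    fun s => toEuclideanCLM (𝕜 := ℝ) ((U s)ᵀ * (1 - A s)) with hT
  set Ks : Fin S → (EuclideanSpace ℝ (Fin n) →L[ℝ] EuclideanSpace ℝ (Fin n)) :=
    fun s => toEuclideanCLM (𝕜 := ℝ) (K s) with hKs
  have hTK : ∀ s, T s = α s • Ks s := by
    intro s
    simp only [hT, hKs]
    rw [← hmat s, _root_.map_smul]
  -- scaled sets and projections
  set Ω' : Fin S → Set (EuclideanSpace ℝ (Fin n)) :=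
    fun s => (fun y => α s • y) '' Ω s with hΩ'
  set P' : Fin S → EuclideanSpace ℝ (Fin n) → EuclideanSpace ℝ (Fin n) :=
    fun s z => α s • P s ((α s)⁻¹ • z) with hP'def
  have hne' : ∀ s, (Ω' s).Nonempty := fun s => (hne s).image _
  have hcl' : ∀ s, IsClosed (Ω' s) := by
    intro s
    have := (Homeomorph.smulOfNeZero (α s) (hα0 s)).isClosedMap _ (hcl s)
    simpa [hΩ'] using this
  have hconv' : ∀ s, Convex ℝ (Ω' s) := by
    intro s
    have := (hconv s).smul (α s)
    rwa [← Set.image_smul] at this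
  have hP' : ∀ s, IsProjOn (Ω' s) (P' s) := by
    intro s z
    constructor
    · exact ⟨P s ((α s)⁻¹ • z), (hP s _).1, rfl⟩
    · rintro y ⟨w, hw, rfl⟩
      have hmin := (hP s ((α s)⁻¹ • z)).2 w hw
      have e1 : ∀ p : EuclideanSpace ℝ (Fin n),
          z - α s • p = α s • ((α s)⁻¹ • z - p) := by
        intro p
        rw [smul_sub, smul_inv_smul₀ (hα0 s)]
      rw [hP'def]
      simp only
      rw [e1, e1, norm_smul, norm_smul]
      exact mul_le_mul_of_nonneg_left hmin (norm_nonneg _)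
  have hLge : ∑ s, ‖T s‖ ^ 2 ≤ L := by
    rw [hL]
    refine Finset.sum_le_sum fun s _ => pow_le_pow_left₀ (norm_nonneg _) ?_ 2
    have h1 : T s = toEuclideanCLM (𝕜 := ℝ) (U s)ᵀ * toEuclideanCLM (𝕜 := ℝ) (1 - A s) := by
      simp only [hT]
      rw [_root_.map_mul]
    rw [h1]
    have h2 : ‖toEuclideanCLM (𝕜 := ℝ) (U s)ᵀ‖ ≤ 1 :=
      clm_opnorm_le_one (by rw [transpose_transpose]; exact hU2 s)
    have h3 := norm_mul_le (toEuclideanCLM (𝕜 := ℝ) (U s)ᵀ) (toEuclideanCLM (𝕜 := ℝ) (1 - A s))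
    have h4 := mul_le_mul_of_nonneg_right h2
      (norm_nonneg (toEuclideanCLM (𝕜 := ℝ) (n := Fin n) (1 - A s)))
    rw [one_mul] at h4
    exact le_trans h3 h4
  -- solutions transfer
  have hsolT : ∀ z, (∀ s, z ∈ C s z) → ∀ s, T s z ∈ Ω' s := by
    intro z hz s
    obtain ⟨y, hy, hyz⟩ : ∃ y ∈ Ω s,
        α s • toEuclideanLin (U s) y + toEuclideanLin (A s) z = z := by
      have := hz s; rw [hC] at this; simpa using this
    refine ⟨y, hy, ?_⟩
    have h1 : toEuclideanCLM (𝕜 := ℝ) (1 - A s) z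
        = α s • toEuclideanCLM (𝕜 := ℝ) (U s) y := by
      rw [map_sub, _root_.map_one, ContinuousLinearMap.sub_apply,
        ContinuousLinearMap.one_apply]
      rw [clm_lin, clm_lin] at hyz
      exact (eq_sub_of_add_eq hyz).symm
    show α s • y = T s z
    simp only [hT]
    rw [clm_mul_apply, h1, _root_.map_smul, ← clm_mul_apply, hU1 s, _root_.map_one,
      ContinuousLinearMap.one_apply]
  -- membership transfer back
  have hsolT' : ∀ z s, T s z ∈ Ω' s → z ∈ C s z := by
    intro z s hzs
    obtain ⟨y, hy, hyT⟩ := hzs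
    beta_reduce at hyT
    rw [hC]
    refine ⟨y, hy, ?_⟩
    -- hyT : α s • y = T s z
    have h1 : α s • toEuclideanCLM (𝕜 := ℝ) (U s) y
        = toEuclideanCLM (𝕜 := ℝ) (1 - A s) z := by
      rw [← _root_.map_smul, hyT]
      simp only [hT]
      rw [← clm_mul_apply, ← mul_assoc, hU2 s, one_mul]
    beta_reduce
    rw [clm_lin, clm_lin, h1, map_sub, _root_.map_one, ContinuousLinearMap.sub_apply,
      ContinuousLinearMap.one_apply]
    abel
  have hsol' : ∃ z, ∀ s, T s z ∈ Ω' s := by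
    obtain ⟨z, hz⟩ := hsol
    exact ⟨z, hsolT z hz⟩
  -- recursion transfer
  have hrec' : ∀ k, x (k + 1) = x k - γ k • ∑ s,
      ContinuousLinearMap.adjoint (T s) (T s (x k) - P' s (T s (x k))) := by
    intro k
    rw [hrec k]
    congr 2
    refine Finset.sum_congr rfl fun s _ => ?_
    have hadj : ContinuousLinearMap.adjoint (T s) =
        α s • toEuclideanCLM (𝕜 := ℝ) (K s)ᵀ := by
      simp only [hT]
      rw [← clm_transpose, ← hmat s, transpose_smul, _root_.map_smul]
    have harg : T s (x k) - P' s (T s (x k))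
        = α s • (Ks s (x k) - P s (Ks s (x k))) := by
      rw [hTK s]
      simp only [hP'def, ContinuousLinearMap.smul_apply]
      rw [inv_smul_smul₀ (hα0 s), smul_sub]
    rw [harg, hadj]
    rw [ContinuousLinearMap.smul_apply, _root_.map_smul, smul_smul, ← sq]
    rw [hKs]
    simp only [clm_lin]
  obtain ⟨xstar, hconv2, hmem⟩ := aux_conv Ω' hne' hcl' hconv' P' hP' T L hLge hsol'
    γ ε hε (fun k => ⟨(hγ k).1, (hγ k).2⟩) x hrec'
  exact ⟨xstar, hconv2, fun s => hsolT' xstar s (hmem s)⟩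
end
end

section
/- Let S be a positive integer and for s = 1,…,S let Ω_s ⊆ ℝⁿ be nonempty, closed and convex sets, A_s real n×n matrices, U_s real n×n unitary matrices, and α_s > 0; set C_s(x) = α_s U_s(Ω_s) + A_s x and K_s = (1/α_s)·U_sᵀ(I − A_s). Assume the solution set {x : x ∈ ∩_{s=1}^{S} C_s(x)} is nonempty. Let {σ_k} be an S-steering sequence, let i(k) = k mod S be the cyclic control, and let {x^k} be generated from an arbitrary x⁰ ∈ ℝⁿ by the sequential iteration x^{k+1} = x^k − σ_k·α_{i(k)}²·K_{i(k)}ᵀ(K_{i(k)} x^k − P_{Ω_{i(k)}}(K_{i(k)} x^k)). If the sequence {x^k} is bounded, then it converges to a point x* satisfying x* ∈ ∩_{s=1}^{S} C_s(x*). -/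
noncomputable section

open Matrix Finset Filter
open scoped RealInnerProductSpace

section Helpers

variable {E : Type*} [NormedAddCommGroup E] [InnerProductSpace ℝ E]

lemma proj_inner_le {Ω : Set E} {P : E → E} (hconv : Convex ℝ Ω) (hP : IsProjOn Ω P)
    (z : E) {y : E} (hy : y ∈ Ω) : ⟪z - P z, y - P z⟫ ≤ 0 := by
  have hPz := (hP z).1
  haveI : Nonempty Ω := ⟨⟨P z, hPz⟩⟩
  have heq : ‖z - P z‖ = ⨅ w : Ω, ‖z - w‖ := by
    refine le_antisymm ?_ ?_
    · exact le_ciInf fun w => (hP z).2 w w.2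
    · exact ciInf_le ⟨0, fun _ ⟨w, h⟩ => h ▸ norm_nonneg _⟩ (⟨P z, hPz⟩ : Ω)
  exact (norm_eq_iInf_iff_real_inner_le_zero hconv hPz).1 heq y hy

lemma proj_lipschitz {Ω : Set E} {P : E → E} (hconv : Convex ℝ Ω) (hP : IsProjOn Ω P)
    (z w : E) : ‖P z - P w‖ ≤ ‖z - w‖ := by
  have h1 := proj_inner_le hconv hP z (hP w).1
  have h2 := proj_inner_le hconv hP w (hP z).1
  have e1 : -⟪z - P z, P w - P z⟫ = ⟪z - P z, P z - P w⟫ := by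
    rw [← inner_neg_right]; congr 1; abel
  have e2 : -⟪w - P w, P z - P w⟫ = ⟪P w - w, P z - P w⟫ := by
    rw [← inner_neg_left]; congr 1; abel
  have e3 : ⟪z - P z, P z - P w⟫ + ⟪P w - w, P z - P w⟫
      = ⟪z - w, P z - P w⟫ - ⟪P z - P w, P z - P w⟫ := by
    rw [← inner_add_left, ← inner_sub_left]; congr 1; abel
  have key : ‖P z - P w‖ ^ 2 ≤ ⟪z - w, P z - P w⟫ := by
    have hn : ⟪P z - P w, P z - P w⟫ = ‖P z - P w‖ ^ 2 := real_inner_self_eq_norm_sq _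
    nlinarith
  nlinarith [real_inner_le_norm (z - w) (P z - P w), norm_nonneg (P z - P w), norm_nonneg (z - w)]

lemma proj_continuous {Ω : Set E} {P : E → E} (hconv : Convex ℝ Ω) (hP : IsProjOn Ω P) :
    Continuous P := by
  refine LipschitzWith.continuous (K := 1) (LipschitzWith.of_dist_le_mul fun z w => ?_)
  simpa [dist_eq_norm] using proj_lipschitz hconv hP z w

lemma fin_exists_bound {S : ℕ} (hS : 0 < S) (f : Fin S → ℝ) : ∃ B, ∀ s, f s ≤ B :=
  ⟨Finset.univ.sup' ⟨⟨0, hS⟩, mem_univ _⟩ f, fun s => Finset.le_sup' f (mem_univ s)⟩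

lemma antitone_from {f : ℕ → ℝ} {N₀ : ℕ} (h : ∀ k, N₀ ≤ k → f (k + 1) ≤ f k) :
    ∀ K, N₀ ≤ K → ∀ k, K ≤ k → f k ≤ f K := by
  intro K hK k hk
  induction k, hk using Nat.le_induction with
  | base => exact le_refl _
  | succ k hk ih => exact le_trans (h k (le_trans hK hk)) ih

lemma sq_tendsto_zero {a : ℕ → ℝ} (ha : ∀ t, 0 ≤ a t)
    (h : Tendsto (fun t => a t ^ 2) atTop (nhds 0)) : Tendsto a atTop (nhds 0) := by
  have := (Real.continuous_sqrt.tendsto 0).comp h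
  simpa [Function.comp_def, Real.sqrt_sq (ha _)] using this

end Helpers

section Abstract

variable {E : Type*} [NormedAddCommGroup E] [InnerProductSpace ℝ E] [FiniteDimensional ℝ E]

set_option maxHeartbeats 2000000 in
lemma cyclic_converge {S : ℕ} (hS : 0 < S)
    (Ω : Fin S → Set E) (hconv : ∀ s, Convex ℝ (Ω s))
    (P : Fin S → E → E) (hP : ∀ s, IsProjOn (Ω s) (P s))
    (T T' : Fin S → E →L[ℝ] E)
    (hadj : ∀ s u v, ⟪T' s u, v⟫ = ⟪u, T s v⟫)
    (c : Fin S → ℝ) (hc : ∀ s, 0 < c s)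
    (z0 : E) (hz0 : ∀ s, T s z0 ∈ Ω s)
    (σ : ℕ → ℝ) (hσpos : ∀ k, 0 < σ k)
    (hσ0 : Tendsto σ atTop (nhds 0))
    (hσratio : ∀ j, 1 ≤ j → j ≤ S - 1 →
      Tendsto (fun k => σ (k * S + j) / σ (k * S)) atTop (nhds 1))
    (hσdiv : Tendsto (fun N => ∑ k ∈ Finset.range N, σ k) atTop atTop)
    (i : ℕ → Fin S) (hi : ∀ k, (i k : ℕ) = k % S)
    (x : ℕ → E)
    (hrec : ∀ k, x (k + 1) = x k - (σ k * c (i k)) •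
      T' (i k) (T (i k) (x k) - P (i k) (T (i k) (x k))))
    (M : ℝ) (hM : ∀ k, ‖x k‖ ≤ M) :
    ∃ xstar, Tendsto x atTop (nhds xstar) ∧ ∀ s, T s xstar ∈ Ω s := by
  classical
  set r : ℕ → E := fun k => T (i k) (x k) - P (i k) (T (i k) (x k)) with hrdef
  obtain ⟨B, hB⟩ := fin_exists_bound hS (fun s => ‖T s‖ * M + ‖T s z0‖)
  have hM0 : 0 ≤ M := le_trans (norm_nonneg _) (hM 0)
  have hrB : ∀ k, ‖r k‖ ≤ B := by
    intro k
    have h1 : ‖r k‖ ≤ ‖T (i k) (x k) - T (i k) z0‖ :=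
      (hP (i k) (T (i k) (x k))).2 _ (hz0 (i k))
    have h2 : ‖T (i k) (x k) - T (i k) z0‖ ≤ ‖T (i k) (x k)‖ + ‖T (i k) z0‖ := norm_sub_le _ _
    have h3 : ‖T (i k) (x k)‖ ≤ ‖T (i k)‖ * M := by
      refine le_trans ((T (i k)).le_opNorm _) ?_
      nlinarith [(T (i k)).opNorm_nonneg, hM k, norm_nonneg (x k)]
    have h4 := hB (i k)
    calc ‖r k‖ ≤ ‖T (i k) (x k)‖ + ‖T (i k) z0‖ := le_trans h1 h2
      _ ≤ ‖T (i k)‖ * M + ‖T (i k) z0‖ := by linarith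
      _ ≤ B := h4
  have hB0 : 0 ≤ B := le_trans (norm_nonneg _) (hrB 0)
  obtain ⟨L, hL⟩ := fin_exists_bound hS (fun s => c s * ‖T' s‖)
  have hL0 : 0 ≤ L := le_trans (mul_nonneg (hc ⟨0, hS⟩).le (norm_nonneg _)) (hL ⟨0, hS⟩)
  obtain ⟨D, hD⟩ := fin_exists_bound hS (fun s => c s * ‖T' s‖ ^ 2)
  have hD0 : 0 ≤ D := le_trans (mul_nonneg (hc ⟨0, hS⟩).le (sq_nonneg _)) (hD ⟨0, hS⟩)
  obtain ⟨cm, hcm0, hcm⟩ : ∃ cm, 0 < cm ∧ ∀ s, cm ≤ c s := by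
    refine ⟨Finset.univ.inf' ⟨⟨0, hS⟩, mem_univ _⟩ c, ?_, fun s => Finset.inf'_le c (mem_univ s)⟩
    exact (Finset.lt_inf'_iff _).2 fun s _ => hc s
  have hstep : ∀ k, ‖x (k + 1) - x k‖ ≤ σ k * (L * B) := by
    intro k
    have hx : x (k + 1) - x k = -((σ k * c (i k)) • T' (i k) (r k)) := by rw [hrec k]; abel
    rw [hx, norm_neg, norm_smul, Real.norm_eq_abs,
      abs_of_pos (mul_pos (hσpos k) (hc (i k)))]
    have h1 : ‖T' (i k) (r k)‖ ≤ ‖T' (i k)‖ * B := by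
      refine le_trans ((T' (i k)).le_opNorm _) ?_
      nlinarith [(T' (i k)).opNorm_nonneg, hrB k, norm_nonneg (r k)]
    have h2 := hL (i k)
    have h3 : c (i k) * ‖T' (i k) (r k)‖ ≤ c (i k) * (‖T' (i k)‖ * B) :=
      mul_le_mul_of_nonneg_left h1 (hc (i k)).le
    have h4 : c (i k) * (‖T' (i k)‖ * B) ≤ L * B := by
      have := mul_le_mul_of_nonneg_right h2 hB0
      nlinarith
    rw [mul_assoc]
    have h5 : c (i k) * ‖T' (i k) (r k)‖ ≤ L * B := le_trans h3 h4
    exact mul_le_mul_of_nonneg_left h5 (hσpos k).le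
  obtain ⟨N₀, hN₀⟩ : ∃ N₀, ∀ k, N₀ ≤ k → σ k * D ≤ 1 := by
    have hev : ∀ᶠ k in atTop, σ k < 1 / (D + 1) := hσ0.eventually_lt_const (by positivity)
    obtain ⟨N₀, h⟩ := eventually_atTop.1 hev
    refine ⟨N₀, fun k hk => ?_⟩
    have h1 := h k hk
    have h2 : σ k * (D + 1) < (1 / (D + 1)) * (D + 1) := by
      have : (0:ℝ) < D + 1 := by linarith
      exact mul_lt_mul_of_pos_right h1 this
    rw [one_div_mul_cancel (by linarith : D + 1 ≠ 0)] at h2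
    nlinarith [hσpos k]
  have fejer : ∀ z, (∀ s, T s z ∈ Ω s) → ∀ k, N₀ ≤ k →
      ‖x (k + 1) - z‖ ^ 2 + σ k * cm * ‖r k‖ ^ 2 ≤ ‖x k - z‖ ^ 2 := by
    intro z hz k hk
    have ht : 0 < σ k * c (i k) := mul_pos (hσpos k) (hc (i k))
    have hx : x (k + 1) - z = (x k - z) - (σ k * c (i k)) • T' (i k) (r k) := by
      rw [hrec k]; abel
    have expand : ‖x (k + 1) - z‖ ^ 2 = ‖x k - z‖ ^ 2
        - 2 * ((σ k * c (i k)) * ⟪x k - z, T' (i k) (r k)⟫)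
        + (σ k * c (i k)) ^ 2 * ‖T' (i k) (r k)‖ ^ 2 := by
      rw [hx, norm_sub_sq_real, real_inner_smul_right, norm_smul, Real.norm_eq_abs,
        abs_of_pos ht, mul_pow]
    have hinner : ‖r k‖ ^ 2 ≤ ⟪x k - z, T' (i k) (r k)⟫ := by
      rw [real_inner_comm, hadj, map_sub]
      have hdec : ⟪r k, T (i k) (x k) - T (i k) z⟫ = ‖r k‖ ^ 2
          + ⟪r k, P (i k) (T (i k) (x k)) - T (i k) z⟫ := by
        have hd : T (i k) (x k) - T (i k) z
            = r k + (P (i k) (T (i k) (x k)) - T (i k) z) := by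
          simp only [hrdef]; abel
        rw [hd, inner_add_right, real_inner_self_eq_norm_sq]
      have hproj : 0 ≤ ⟪r k, P (i k) (T (i k) (x k)) - T (i k) z⟫ := by
        have hple := proj_inner_le (hconv (i k)) (hP (i k)) (T (i k) (x k)) (hz (i k))
        have e : ⟪r k, P (i k) (T (i k) (x k)) - T (i k) z⟫
            = -⟪T (i k) (x k) - P (i k) (T (i k) (x k)),
                T (i k) z - P (i k) (T (i k) (x k))⟫ := by
          rw [← inner_neg_right]
          simp only [hrdef]
          congr 1
          abel
        rw [e]; linarith
      linarith [hdec, hproj]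
    have hTr : ‖T' (i k) (r k)‖ ^ 2 ≤ ‖T' (i k)‖ ^ 2 * ‖r k‖ ^ 2 := by
      have h1 := (T' (i k)).le_opNorm (r k)
      nlinarith [norm_nonneg (T' (i k) (r k)), (T' (i k)).opNorm_nonneg, norm_nonneg (r k)]
    have key1 : (σ k * c (i k)) ^ 2 * ‖T' (i k) (r k)‖ ^ 2
        ≤ (σ k * c (i k)) * ‖r k‖ ^ 2 := by
      have h1 : (σ k * c (i k)) ^ 2 * ‖T' (i k) (r k)‖ ^ 2
          ≤ (σ k * c (i k)) ^ 2 * (‖T' (i k)‖ ^ 2 * ‖r k‖ ^ 2) := by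
        nlinarith [sq_nonneg (σ k * c (i k))]
      have h2 : (σ k * c (i k)) ^ 2 * (‖T' (i k)‖ ^ 2 * ‖r k‖ ^ 2)
          = (σ k * c (i k)) * ((σ k * (c (i k) * ‖T' (i k)‖ ^ 2)) * ‖r k‖ ^ 2) := by ring
      have h3 : σ k * (c (i k) * ‖T' (i k)‖ ^ 2) ≤ σ k * D :=
        mul_le_mul_of_nonneg_left (hD (i k)) (hσpos k).le
      have h4 : σ k * (c (i k) * ‖T' (i k)‖ ^ 2) ≤ 1 := le_trans h3 (hN₀ k hk)
      have h5 : (σ k * (c (i k) * ‖T' (i k)‖ ^ 2)) * ‖r k‖ ^ 2 ≤ ‖r k‖ ^ 2 := by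
        nlinarith [sq_nonneg ‖r k‖]
      calc (σ k * c (i k)) ^ 2 * ‖T' (i k) (r k)‖ ^ 2
          ≤ (σ k * c (i k)) * ((σ k * (c (i k) * ‖T' (i k)‖ ^ 2)) * ‖r k‖ ^ 2) := by
            rw [← h2]; exact h1
        _ ≤ (σ k * c (i k)) * ‖r k‖ ^ 2 := mul_le_mul_of_nonneg_left h5 ht.le
    have key2 : σ k * cm * ‖r k‖ ^ 2 ≤ (σ k * c (i k)) * ‖r k‖ ^ 2 :=
      mul_le_mul_of_nonneg_right
        (mul_le_mul_of_nonneg_left (hcm (i k)) (hσpos k).le) (sq_nonneg _)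
    have h6 := mul_le_mul_of_nonneg_left hinner ht.le
    linarith [expand, key1, key2, h6]
  -- telescoping bound on weighted residual sums
  have hρ0 : ∀ k, 0 ≤ σ k * ‖r k‖ ^ 2 := fun k => mul_nonneg (hσpos k).le (sq_nonneg _)
  have htel : ∀ N, N₀ ≤ N →
      cm * (∑ k ∈ Finset.Ico N₀ N, σ k * ‖r k‖ ^ 2) + ‖x N - z0‖ ^ 2 ≤ ‖x N₀ - z0‖ ^ 2 := by
    intro N hN
    induction N, hN using Nat.le_induction with
    | base => simp
    | succ N hN ih =>
      have hf := fejer z0 hz0 N hN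
      rw [Finset.sum_Ico_succ_top hN, mul_add]
      nlinarith [hf, ih]
  obtain ⟨Cb, hCb⟩ : ∃ Cb, ∀ N, ∑ k ∈ Finset.range N, σ k * ‖r k‖ ^ 2 ≤ Cb := by
    refine ⟨∑ k ∈ Finset.range N₀, σ k * ‖r k‖ ^ 2 + ‖x N₀ - z0‖ ^ 2 / cm, fun N => ?_⟩
    have hdivnn : 0 ≤ ‖x N₀ - z0‖ ^ 2 / cm := div_nonneg (sq_nonneg _) hcm0.le
    rcases le_or_gt N N₀ with h | h
    · have hmono : ∑ k ∈ Finset.range N, σ k * ‖r k‖ ^ 2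
          ≤ ∑ k ∈ Finset.range N₀, σ k * ‖r k‖ ^ 2 :=
        Finset.sum_le_sum_of_subset_of_nonneg (Finset.range_subset_range.2 h)
          (fun k _ _ => hρ0 k)
      linarith
    · have h1 := htel N h.le
      have hsplit : ∑ k ∈ Finset.range N, σ k * ‖r k‖ ^ 2
          = ∑ k ∈ Finset.range N₀, σ k * ‖r k‖ ^ 2
            + ∑ k ∈ Finset.Ico N₀ N, σ k * ‖r k‖ ^ 2 :=
        (Finset.sum_range_add_sum_Ico _ h.le).symm
      have h2 : ∑ k ∈ Finset.Ico N₀ N, σ k * ‖r k‖ ^ 2 ≤ ‖x N₀ - z0‖ ^ 2 / cm := by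
        rw [le_div_iff₀ hcm0]
        nlinarith [sq_nonneg ‖x N - z0‖]
      linarith
  -- eventual two-sided comparison of σ within a cycle
  obtain ⟨M₂, hM₂⟩ : ∃ M₂, ∀ m, M₂ ≤ m → ∀ j, j < S →
      σ (m * S + j) ≤ 2 * σ (m * S) ∧ σ (m * S) ≤ 2 * σ (m * S + j) := by
    have hev : ∀ᶠ m in atTop, ∀ j ∈ Finset.range S,
        (j = 0 ∨ (σ (m * S + j) / σ (m * S) < 2 ∧ 1 / 2 < σ (m * S + j) / σ (m * S))) := by
      rw [eventually_all_finset]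
      intro j hj
      rcases Nat.eq_zero_or_pos j with h0 | h0
      · exact Eventually.of_forall fun m => Or.inl h0
      · have hj' : j ≤ S - 1 := by
          have := Finset.mem_range.1 hj; omega
        have htj := hσratio j h0 hj'
        have h1 : ∀ᶠ m in atTop, σ (m * S + j) / σ (m * S) < 2 :=
          htj.eventually_lt_const one_lt_two
        have h2 : ∀ᶠ m in atTop, 1 / 2 < σ (m * S + j) / σ (m * S) :=
          htj.eventually_const_lt (by norm_num)
        filter_upwards [h1, h2] with m hm1 hm2
        exact Or.inr ⟨hm1, hm2⟩
    obtain ⟨M₂, hM₂⟩ := eventually_atTop.1 hev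
    refine ⟨M₂, fun m hm j hj => ?_⟩
    have hj2 := hM₂ m hm j (Finset.mem_range.2 hj)
    have hpos := hσpos (m * S)
    have hpos2 := hσpos (m * S + j)
    rcases hj2 with h0 | ⟨hlt, hgt⟩
    · subst h0
      constructor <;> [skip; skip] <;> simp <;> linarith
    · constructor
      · rw [div_lt_iff₀ hpos] at hlt; linarith
      · rw [lt_div_iff₀ hpos] at hgt; linarith
  -- block decomposition of sums
  have hblock : ∀ (f : ℕ → ℝ) (N : ℕ),
      ∑ k ∈ Finset.range (N * S), f k
        = ∑ m ∈ Finset.range N, ∑ j ∈ Finset.range S, f (m * S + j) := by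
    intro f N
    induction N with
    | zero => simp
    | succ N ih => rw [Finset.sum_range_succ, ← ih, Nat.succ_mul, Finset.sum_range_add]
  -- divergence of block-start sums
  have hdivS : Tendsto (fun N => ∑ m ∈ Finset.range N, σ (m * S)) atTop atTop := by
    have hmulS : Tendsto (fun N : ℕ => N * S) atTop atTop :=
      tendsto_atTop_mono (fun N => Nat.le_mul_of_pos_right N hS) tendsto_id
    have hcomp : Tendsto (fun N => ∑ k ∈ Finset.range (N * S), σ k) atTop atTop :=
      hσdiv.comp hmulS
    have hsub : Tendsto (fun N => (∑ k ∈ Finset.range (N * S), σ k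
        - ∑ k ∈ Finset.range (M₂ * S), σ k) / (2 * S)) atTop atTop := by
      refine Tendsto.atTop_div_const (by positivity) ?_
      simpa [sub_eq_add_neg] using
        tendsto_atTop_add_const_right atTop (-(∑ k ∈ Finset.range (M₂ * S), σ k)) hcomp
    refine tendsto_atTop_mono' atTop ?_ hsub
    filter_upwards [eventually_ge_atTop M₂] with N hN
    have hb1 : ∑ m ∈ Finset.Ico M₂ N, (∑ j ∈ Finset.range S, σ (m * S + j))
        ≤ ∑ m ∈ Finset.Ico M₂ N, (2 * S) * σ (m * S) := by
      refine Finset.sum_le_sum fun m hm => ?_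
      have hm2 := (Finset.mem_Ico.1 hm).1
      have : ∑ j ∈ Finset.range S, σ (m * S + j) ≤ ∑ j ∈ Finset.range S, 2 * σ (m * S) :=
        Finset.sum_le_sum fun j hj => (hM₂ m hm2 j (Finset.mem_range.1 hj)).1
      calc ∑ j ∈ Finset.range S, σ (m * S + j) ≤ ∑ j ∈ Finset.range S, 2 * σ (m * S) := this
        _ = (2 * S) * σ (m * S) := by rw [Finset.sum_const, Finset.card_range]; push_cast; ring
    have hIcoEq : ∑ m ∈ Finset.Ico M₂ N, (∑ j ∈ Finset.range S, σ (m * S + j))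
        = ∑ k ∈ Finset.range (N * S), σ k - ∑ k ∈ Finset.range (M₂ * S), σ k := by
      rw [hblock σ N, hblock σ M₂, Finset.sum_Ico_eq_sub _ hN]
    have hb2 : ∑ m ∈ Finset.Ico M₂ N, σ (m * S) ≤ ∑ m ∈ Finset.range N, σ (m * S) := by
      refine Finset.sum_le_sum_of_subset_of_nonneg ?_ (fun m _ _ => (hσpos _).le)
      intro m hm
      exact Finset.mem_range.2 (Finset.mem_Ico.1 hm).2
    have hS2 : (0:ℝ) < 2 * S := by positivity
    rw [div_le_iff₀ hS2, ← hIcoEq]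
    calc ∑ m ∈ Finset.Ico M₂ N, (∑ j ∈ Finset.range S, σ (m * S + j))
        ≤ ∑ m ∈ Finset.Ico M₂ N, (2 * S) * σ (m * S) := hb1
      _ = (∑ m ∈ Finset.Ico M₂ N, σ (m * S)) * (2 * S) := by
          rw [← Finset.mul_sum]; ring
      _ ≤ (∑ m ∈ Finset.range N, σ (m * S)) * (2 * S) := by
          exact mul_le_mul_of_nonneg_right hb2 hS2.le
  -- frequently, all residuals within a cycle are small
  have hfreq : ∀ ε, 0 < ε → ∀ Ms, ∃ m, Ms ≤ m ∧ ∀ j, j < S → ‖r (m * S + j)‖ ^ 2 < ε := by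
    intro ε hε Ms
    by_contra hcon
    push_neg at hcon
    set Mx := max Ms M₂ with hMx
    have hPm : ∀ m, Mx ≤ m →
        ε / 2 * σ (m * S) ≤ ∑ j ∈ Finset.range S, σ (m * S + j) * ‖r (m * S + j)‖ ^ 2 := by
      intro m hm
      obtain ⟨j, hjS, hjε⟩ := hcon m (le_trans (le_max_left _ _) hm)
      have h1 := (hM₂ m (le_trans (le_max_right _ _) hm) j hjS).2
      have h2 := hσpos (m * S + j)
      have hterm : ε / 2 * σ (m * S) ≤ σ (m * S + j) * ‖r (m * S + j)‖ ^ 2 := by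
        nlinarith [hσpos (m * S)]
      exact le_trans hterm (Finset.single_le_sum
        (f := fun j => σ (m * S + j) * ‖r (m * S + j)‖ ^ 2)
        (fun j _ => mul_nonneg (hσpos _).le (sq_nonneg _)) (Finset.mem_range.2 hjS))
    -- pick N making the block-start sum large
    have hbig : ∀ᶠ N in atTop, ∑ m ∈ Finset.range Mx, σ (m * S) + (2 * (Cb + 1)) / ε
        < ∑ m ∈ Finset.range N, σ (m * S) := hdivS.eventually_gt_atTop _
    obtain ⟨N, hN1, hN2⟩ := (hbig.and (eventually_ge_atTop Mx)).exists
    have hXN : (2 * (Cb + 1)) / ε < ∑ m ∈ Finset.Ico Mx N, σ (m * S) := by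
      rw [Finset.sum_Ico_eq_sub _ hN2]
      linarith
    have hchain : ε / 2 * ∑ m ∈ Finset.Ico Mx N, σ (m * S) ≤ Cb := by
      have c1 : ε / 2 * ∑ m ∈ Finset.Ico Mx N, σ (m * S)
          = ∑ m ∈ Finset.Ico Mx N, ε / 2 * σ (m * S) := Finset.mul_sum _ _ _
      have c2 : ∑ m ∈ Finset.Ico Mx N, ε / 2 * σ (m * S)
          ≤ ∑ m ∈ Finset.Ico Mx N, ∑ j ∈ Finset.range S, σ (m * S + j) * ‖r (m * S + j)‖ ^ 2 :=
        Finset.sum_le_sum fun m hm => hPm m (Finset.mem_Ico.1 hm).1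
      have c3 : ∑ m ∈ Finset.Ico Mx N, ∑ j ∈ Finset.range S, σ (m * S + j) * ‖r (m * S + j)‖ ^ 2
          ≤ ∑ m ∈ Finset.range N, ∑ j ∈ Finset.range S, σ (m * S + j) * ‖r (m * S + j)‖ ^ 2 := by
        refine Finset.sum_le_sum_of_subset_of_nonneg ?_
          (fun m _ _ => Finset.sum_nonneg fun j _ => mul_nonneg (hσpos _).le (sq_nonneg _))
        intro m hm
        exact Finset.mem_range.2 (Finset.mem_Ico.1 hm).2
      have c4 : ∑ m ∈ Finset.range N, ∑ j ∈ Finset.range S, σ (m * S + j) * ‖r (m * S + j)‖ ^ 2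
          ≤ Cb := by
        rw [← hblock (fun k => σ k * ‖r k‖ ^ 2) N]
        exact hCb (N * S)
      linarith
    have : 2 * (Cb + 1) / ε * (ε / 2) < (∑ m ∈ Finset.Ico Mx N, σ (m * S)) * (ε / 2) :=
      mul_lt_mul_of_pos_right hXN (by positivity)
    rw [div_mul_eq_mul_div, mul_comm] at this
    have heq : ε / 2 * (2 * (Cb + 1)) / ε = Cb + 1 := by
      field_simp
    nlinarith [hchain]
  -- choose a subsequence of cycles with vanishing residuals
  have hchoice : ∀ t : ℕ, ∃ m, t ≤ m ∧ ∀ j, j < S →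
      ‖r (m * S + j)‖ ^ 2 < 1 / ((t : ℝ) + 1) := fun t =>
    hfreq (1 / ((t : ℝ) + 1)) (by positivity) t
  choose m hm1 hm2 using hchoice
  -- Bolzano–Weierstrass
  have hbound : ∀ t, x (m t * S) ∈ Metric.closedBall (0 : E) M := by
    intro t
    simpa [Metric.mem_closedBall, dist_eq_norm] using hM (m t * S)
  obtain ⟨xstar, -, φ, hφmono, hφlim⟩ :=
    tendsto_subseq_of_bounded Metric.isBounded_closedBall hbound
  have hφlim' : Tendsto (fun t => x (m (φ t) * S)) atTop (nhds xstar) := hφlim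
  -- the iterates drift slowly within a cycle
  have hdrift : ∀ a b, ‖x (a + b) - x a‖ ≤ ∑ l ∈ Finset.range b, σ (a + l) * (L * B) := by
    intro a b
    induction b with
    | zero => simp
    | succ b ih =>
      rw [Finset.sum_range_succ, show a + (b + 1) = (a + b) + 1 by ring]
      calc ‖x ((a + b) + 1) - x a‖
          ≤ ‖x ((a + b) + 1) - x (a + b)‖ + ‖x (a + b) - x a‖ :=
            norm_sub_le_norm_sub_add_norm_sub _ _ _
        _ ≤ σ (a + b) * (L * B) + ∑ l ∈ Finset.range b, σ (a + l) * (L * B) := by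
            have := hstep (a + b)
            gcongr
        _ = ∑ l ∈ Finset.range b, σ (a + l) * (L * B) + σ (a + b) * (L * B) := by ring
  have hφarg : ∀ l : ℕ, Tendsto (fun t => m (φ t) * S + l) atTop atTop := by
    intro l
    refine tendsto_atTop_mono (fun t => ?_) tendsto_id
    calc (t : ℕ) ≤ φ t := hφmono.le_apply
      _ ≤ m (φ t) := hm1 (φ t)
      _ ≤ m (φ t) * S := Nat.le_mul_of_pos_right _ hS
      _ ≤ m (φ t) * S + l := Nat.le_add_right _ _
  have hφσ : ∀ l : ℕ, Tendsto (fun t => σ (m (φ t) * S + l)) atTop (nhds 0) := fun l =>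
    hσ0.comp (hφarg l)
  have hshift : ∀ j, j < S → Tendsto (fun t => x (m (φ t) * S + j)) atTop (nhds xstar) := by
    intro j hj
    rw [tendsto_iff_norm_sub_tendsto_zero]
    have hb : ∀ t, ‖x (m (φ t) * S + j) - xstar‖
        ≤ (∑ l ∈ Finset.range j, σ (m (φ t) * S + l) * (L * B))
          + ‖x (m (φ t) * S) - xstar‖ := by
      intro t
      calc ‖x (m (φ t) * S + j) - xstar‖
          ≤ ‖x (m (φ t) * S + j) - x (m (φ t) * S)‖ + ‖x (m (φ t) * S) - xstar‖ :=
            norm_sub_le_norm_sub_add_norm_sub _ _ _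
        _ ≤ _ := by
            have := hdrift (m (φ t) * S) j
            gcongr
    have hlim1 : Tendsto (fun t => ∑ l ∈ Finset.range j, σ (m (φ t) * S + l) * (L * B))
        atTop (nhds 0) := by
      have := tendsto_finset_sum (Finset.range j)
        (fun l _ => ((hφσ l).mul_const (L * B)))
      simpa using this
    have hlim2 : Tendsto (fun t => ‖x (m (φ t) * S) - xstar‖) atTop (nhds 0) :=
      tendsto_iff_norm_sub_tendsto_zero.1 hφlim'
    exact squeeze_zero (fun t => norm_nonneg _) hb (by simpa using hlim1.add hlim2)
  -- the limit point solves every constraint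
  have hsolstar : ∀ s, T s xstar ∈ Ω s := by
    intro s
    have hjS : (s : ℕ) < S := s.isLt
    have hieq : ∀ t, i (m (φ t) * S + (s : ℕ)) = s := by
      intro t
      apply Fin.ext
      rw [hi (m (φ t) * S + (s : ℕ)), Nat.mul_comm (m (φ t)) S, Nat.mul_add_mod]
      exact Nat.mod_eq_of_lt hjS
    have hres : Tendsto
        (fun t => ‖T s (x (m (φ t) * S + (s : ℕ)))
          - P s (T s (x (m (φ t) * S + (s : ℕ))))‖ ^ 2) atTop (nhds 0) := by
      refine squeeze_zero (fun t => sq_nonneg _) (fun t => ?_)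
        tendsto_one_div_add_atTop_nhds_zero_nat
      have h1 := hm2 (φ t) (s : ℕ) hjS
      simp only [hrdef, hieq t] at h1
      have h2 : 1 / ((φ t : ℝ) + 1) ≤ 1 / ((t : ℝ) + 1) := by
        have : (t : ℝ) ≤ (φ t : ℝ) := by exact_mod_cast hφmono.le_apply
        apply one_div_le_one_div_of_le (by positivity)
        linarith
      exact le_trans h1.le h2
    have hcont : Continuous (fun v : E => T s v - P s (T s v)) :=
      (T s).continuous.sub ((proj_continuous (hconv s) (hP s)).comp (T s).continuous)
    have hlim := ((continuous_norm.comp hcont).tendsto xstar).comp (hshift (s : ℕ) hjS)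
    have hzero : Tendsto
        (fun t => ‖T s (x (m (φ t) * S + (s : ℕ)))
          - P s (T s (x (m (φ t) * S + (s : ℕ))))‖) atTop (nhds 0) :=
      sq_tendsto_zero (fun t => norm_nonneg _) hres
    have heq0 : ‖T s xstar - P s (T s xstar)‖ = 0 :=
      tendsto_nhds_unique hlim hzero
    have := sub_eq_zero.1 (norm_eq_zero.1 heq0)
    rw [this]
    exact (hP s _).1
  -- Fejér monotonicity towards the limit point gives convergence
  have hmono : ∀ k, N₀ ≤ k → ‖x (k + 1) - xstar‖ ^ 2 ≤ ‖x k - xstar‖ ^ 2 := by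
    intro k hk
    have hf := fejer xstar hsolstar k hk
    nlinarith [mul_nonneg (mul_nonneg (hσpos k).le hcm0.le) (sq_nonneg ‖r k‖)]
  have hstar2 : Tendsto (fun t => ‖x (m (φ t) * S) - xstar‖ ^ 2) atTop (nhds 0) := by
    have := tendsto_iff_norm_sub_tendsto_zero.1 hφlim'
    simpa using this.pow 2
  have htends : Tendsto (fun k => ‖x k - xstar‖ ^ 2) atTop (nhds 0) := by
    rw [Metric.tendsto_atTop]
    intro ε hε
    have h1 : ∀ᶠ t in atTop, ‖x (m (φ t) * S) - xstar‖ ^ 2 < ε :=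
      hstar2.eventually_lt_const hε
    have h2 : ∀ᶠ t in atTop, N₀ ≤ m (φ t) * S := (hφarg 0).eventually_ge_atTop N₀
    obtain ⟨t, ht1, ht2⟩ := (h1.and h2).exists
    refine ⟨m (φ t) * S, fun k hk => ?_⟩
    have h3 : ‖x k - xstar‖ ^ 2 ≤ ‖x (m (φ t) * S) - xstar‖ ^ 2 :=
      antitone_from (f := fun k => ‖x k - xstar‖ ^ 2) hmono (m (φ t) * S) ht2 k hk
    rw [Real.dist_eq, sub_zero, abs_of_nonneg (sq_nonneg _)]
    linarith
  have hnormtends : Tendsto (fun k => ‖x k - xstar‖) atTop (nhds 0) :=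
    sq_tendsto_zero (fun k => norm_nonneg _) htends
  exact ⟨xstar, tendsto_iff_norm_sub_tendsto_zero.2 hnormtends, hsolstar⟩

end Abstract

section MatrixLemmas

variable {n : ℕ}

lemma tel_mul (M N : Matrix (Fin n) (Fin n) ℝ) (v : EuclideanSpace ℝ (Fin n)) :
    toEuclideanLin (M * N) v = toEuclideanLin M (toEuclideanLin N v) := by
  simp [Matrix.toEuclideanLin_apply, Matrix.mulVec_mulVec]

lemma tel_one (v : EuclideanSpace ℝ (Fin n)) :
    toEuclideanLin (1 : Matrix (Fin n) (Fin n) ℝ) v = v := by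
  simp [Matrix.toEuclideanLin_apply]

lemma tel_smul (c : ℝ) (M : Matrix (Fin n) (Fin n) ℝ) (v : EuclideanSpace ℝ (Fin n)) :
    toEuclideanLin (c • M) v = c • toEuclideanLin M v := by
  rw [_root_.map_smul]; rfl

lemma tel_adj (M : Matrix (Fin n) (Fin n) ℝ) (u v : EuclideanSpace ℝ (Fin n)) :
    ⟪toEuclideanLin Mᵀ u, v⟫ = ⟪u, toEuclideanLin M v⟫ := by
  have h : Mᵀ = Mᴴ := rfl
  rw [h, Matrix.toEuclideanLin_conjTranspose_eq_adjoint, LinearMap.adjoint_inner_left]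

end MatrixLemmas

theorem stmt_13 {n S : ℕ} (hS : 0 < S)
    (Ω : Fin S → Set (EuclideanSpace ℝ (Fin n)))
    (hne : ∀ s, (Ω s).Nonempty) (hcl : ∀ s, IsClosed (Ω s)) (hconv : ∀ s, Convex ℝ (Ω s))
    (A U : Fin S → Matrix (Fin n) (Fin n) ℝ)
    (hU1 : ∀ s, (U s)ᵀ * U s = 1) (hU2 : ∀ s, U s * (U s)ᵀ = 1)
    (α : Fin S → ℝ) (hα : ∀ s, 0 < α s)
    (P : Fin S → EuclideanSpace ℝ (Fin n) → EuclideanSpace ℝ (Fin n))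
    (hP : ∀ s, IsProjOn (Ω s) (P s))
    (C : Fin S → EuclideanSpace ℝ (Fin n) → Set (EuclideanSpace ℝ (Fin n)))
    (hC : ∀ s x, C s x =
      (fun y => α s • toEuclideanLin (U s) y + toEuclideanLin (A s) x) '' Ω s)
    (K : Fin S → Matrix (Fin n) (Fin n) ℝ)
    (hK : ∀ s, K s = (1 / α s) • ((U s)ᵀ * (1 - A s)))
    (hsol : ∃ x, ∀ s, x ∈ C s x)
    -- `σ` is an `S`-steering sequence:
    (σ : ℕ → ℝ) (hσpos : ∀ k, 0 < σ k)
    (hσ0 : Tendsto σ atTop (nhds 0))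
    (hσratio : ∀ j, 1 ≤ j → j ≤ S - 1 →
      Tendsto (fun k => σ (k * S + j) / σ (k * S)) atTop (nhds 1))
    (hσdiv : Tendsto (fun N => ∑ k ∈ Finset.range N, σ k) atTop atTop)
    -- the cyclic control `i(k) = k mod S` and the sequential iteration:
    (i : ℕ → Fin S) (hi : ∀ k, i k = ⟨k % S, Nat.mod_lt k hS⟩)
    (x : ℕ → EuclideanSpace ℝ (Fin n))
    (hrec : ∀ k, x (k + 1) = x k - σ k • (α (i k)) ^ 2 •
      toEuclideanLin (K (i k))ᵀ
        (toEuclideanLin (K (i k)) (x k) - P (i k) (toEuclideanLin (K (i k)) (x k))))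
    (hbdd : ∃ M, ∀ k, ‖x k‖ ≤ M) :
    ∃ xstar, Tendsto x atTop (nhds xstar) ∧ ∀ s, xstar ∈ C s xstar := by
  obtain ⟨xhat, hxhat⟩ := hsol
  obtain ⟨M, hM⟩ := hbdd
  set T : Fin S → EuclideanSpace ℝ (Fin n) →L[ℝ] EuclideanSpace ℝ (Fin n) :=
    fun s => LinearMap.toContinuousLinearMap (toEuclideanLin (K s)) with hT
  set T' : Fin S → EuclideanSpace ℝ (Fin n) →L[ℝ] EuclideanSpace ℝ (Fin n) :=
    fun s => LinearMap.toContinuousLinearMap (toEuclideanLin (K s)ᵀ) with hT'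
  have hTapp : ∀ s v, T s v = toEuclideanLin (K s) v := fun s v => rfl
  have hT'app : ∀ s v, T' s v = toEuclideanLin (K s)ᵀ v := fun s v => rfl
  have hadj : ∀ s u v, ⟪T' s u, v⟫ = ⟪u, T s v⟫ := fun s u v => tel_adj (K s) u v
  have hαne : ∀ s, α s ≠ 0 := fun s => (hα s).ne'
  -- forward: a fixed point of `C s` has residual-free image
  have hfwd : ∀ s (y ω : EuclideanSpace ℝ (Fin n)),
      α s • toEuclideanLin (U s) ω + toEuclideanLin (A s) y = y →
      toEuclideanLin (K s) y = ω := by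
    intro s y ω hy
    have h1 : toEuclideanLin (1 - A s) y = α s • toEuclideanLin (U s) ω := by
      rw [map_sub, LinearMap.sub_apply, tel_one]
      have h2 : toEuclideanLin (A s) y = y - α s • toEuclideanLin (U s) ω :=
        eq_sub_of_add_eq' hy
      rw [h2]; abel
    rw [hK s, tel_smul, tel_mul, h1, _root_.map_smul, ← tel_mul, hU1 s, tel_one, smul_smul,
      one_div_mul_cancel (hαne s), one_smul]
  have hz0 : ∀ s, T s xhat ∈ Ω s := by
    intro s
    have := hxhat s
    rw [hC s xhat] at this
    obtain ⟨ω, hω, heq⟩ := this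
    rw [hTapp, hfwd s xhat ω heq]
    exact hω
  -- backward: residual-free points are fixed points of `C s`
  have hback : ∀ s (y : EuclideanSpace ℝ (Fin n)),
      toEuclideanLin (K s) y ∈ Ω s → y ∈ C s y := by
    intro s y hω
    rw [hC s y]
    refine ⟨toEuclideanLin (K s) y, hω, ?_⟩
    have h1 : toEuclideanLin (U s) (toEuclideanLin (K s) y)
        = (1 / α s) • toEuclideanLin (1 - A s) y := by
      rw [hK s, tel_smul, _root_.map_smul, ← tel_mul, ← Matrix.mul_assoc, hU2 s, Matrix.one_mul]
    show α s • toEuclideanLin (U s) (toEuclideanLin (K s) y) + toEuclideanLin (A s) y = y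
    rw [h1, smul_smul, mul_one_div_cancel (hαne s), one_smul, map_sub, LinearMap.sub_apply,
      tel_one]
    abel
  have hi' : ∀ k, ((i k : Fin S) : ℕ) = k % S := fun k => by rw [hi k]
  have hrec' : ∀ k, x (k + 1) = x k - (σ k * (α (i k)) ^ 2) •
      T' (i k) (T (i k) (x k) - P (i k) (T (i k) (x k))) := by
    intro k
    rw [hrec k, smul_smul]
    rfl
  obtain ⟨xstar, hconv', hsol'⟩ :=
    cyclic_converge hS Ω hconv P hP T T' hadj (fun s => α s ^ 2)
      (fun s => pow_pos (hα s) 2) xhat hz0 σ hσpos hσ0 hσratio hσdiv i hi' x hrec' M hM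
  exact ⟨xstar, hconv', fun s => hback s xstar (hsol' s)⟩
end
end
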